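/- For all n ≥ 1, the following identity of polynomials in x over ℚ holds: (x+2)·(x+n+2)(x+n+3)⋯(x+2n-1)/(n-1)! = Σ_{j=0}^{n-1} ((2j+2)/(n+j+1))·binom(2n-1, n-j-1)·binom(x, j); equivalently, ((x+2)/(x+n+1))·binom(x+2n-1, n-1) = Σ_{j=0}^{n-1} ((2j+2)/(n+j+1))·binom(2n-1, n-j-1)·binom(x, j). -/

import Mathlib

open Polynomial Finset Nat

/-- The generalized binomial coefficient polynomial `binom(x, j) = x(x-1)⋯(x-j+1)/j!`. -/
noncomputable def choosePoly (j : ℕ) : Polynomial ℚ :=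
  Polynomial.C ((j ! : ℚ))⁻¹ * ∏ i ∈ Finset.range j, (Polynomial.X - Polynomial.C (i : ℚ))


lemma myL1 (m j : ℕ) : ((m:ℚ) - j) * (m.choose j : ℚ) = ((j:ℚ)+1) * (m.choose (j+1) : ℚ) := by
  rcases le_or_gt j m with h | h
  · have h1 := Nat.choose_succ_right_eq m j
    have h2 : ((m.choose (j+1) * (j+1) : ℕ) : ℚ) = ((m.choose j * (m - j) : ℕ) : ℚ) := by rw [h1]
    push_cast [Nat.cast_sub h] at h2
    linarith
  · rw [Nat.choose_eq_zero_of_lt h, Nat.choose_eq_zero_of_lt (Nat.lt_succ_of_lt h)]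
    simp

lemma myL2 (n j : ℕ) (h : j < n) :
    ((n:ℚ) - j) * ((2*n-1).choose (n-j) : ℚ) = ((n:ℚ) + j) * ((2*n-1).choose (n-1-j) : ℚ) := by
  have h1 := Nat.choose_succ_right_eq (2*n-1) (n-1-j)
  have e1 : n-1-j+1 = n-j := by omega
  have e2 : 2*n-1-(n-1-j) = n+j := by omega
  rw [e1, e2] at h1
  have h2 : (((2*n-1).choose (n-j) * (n-j) : ℕ) : ℚ) = (((2*n-1).choose (n-1-j) * (n+j) : ℕ):ℚ) := by
    rw [h1]
  push_cast [Nat.cast_sub h.le] at h2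
  linarith

lemma myVand (m a k : ℕ) :
    ((m + a).choose k : ℚ) = ∑ j ∈ range (k+1), (m.choose j : ℚ) * (a.choose (k - j) : ℚ) := by
  rw [Nat.add_choose_eq, Finset.Nat.sum_antidiagonal_eq_sum_range_succ_mk]
  push_cast
  rfl

lemma choosePoly_eval (j m : ℕ) : (choosePoly j).eval (m:ℚ) = (m.choose j : ℚ) := by
  unfold choosePoly
  simp only [eval_mul, eval_C, eval_prod, eval_sub, eval_X]
  rcases le_or_gt j m with h | h
  · have hp : ∏ i ∈ range j, ((m:ℚ) - (i:ℚ)) = ((m.descFactorial j : ℕ) : ℚ) := by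
      rw [Nat.descFactorial_eq_prod_range, Nat.cast_prod]
      refine Finset.prod_congr rfl fun i hi => ?_
      rw [Nat.cast_sub (le_trans (Finset.mem_range.mp hi).le h)]
    rw [hp, Nat.descFactorial_eq_factorial_mul_choose, Nat.cast_mul,
      inv_mul_cancel_left₀ (by exact_mod_cast (Nat.factorial_ne_zero j))]
  · rw [Finset.prod_eq_zero (Finset.mem_range.mpr h) (by simp), Nat.choose_eq_zero_of_lt h]
    simp

lemma key (n m : ℕ) (hn : 1 ≤ n) :
    ((m:ℚ) + 2) * (((m + 2*n - 1).choose (n-1) : ℕ) : ℚ) =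
      ∑ j ∈ range n, ((m:ℚ) + (n:ℚ) + 1) *
        ((2*(j:ℚ)+2)/((n:ℚ)+(j:ℚ)+1) * (((2*n-1).choose (n-1-j) : ℕ) : ℚ)) * (m.choose j : ℚ) := by
  have hn0 : (0:ℚ) < (n:ℚ) := by exact_mod_cast hn
  set a := 2*n-1 with ha
  have hmn : m + 2*n - 1 = m + a := by omega
  have e1 : n - 1 + 1 = n := by omega
  -- LHS rewrite
  have hL1 := Nat.choose_succ_right_eq (m + a) (n-1)
  rw [e1, show m + a - (n-1) = m + n by omega] at hL1
  have hL1' := congrArg (fun x : ℕ => (x:ℚ)) hL1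
  push_cast at hL1'
  have hLHS : ((m:ℚ) + 2) * (((m + 2*n - 1).choose (n-1) : ℕ) : ℚ)
      = (n:ℚ) * ((m+a).choose n : ℚ) - ((n:ℚ)-2) * ((m+a).choose (n-1) : ℚ) := by
    rw [hmn]; linarith
  rw [hLHS]
  have hV1 : ((m+a).choose n : ℚ) = ∑ j ∈ range (n+1), (m.choose j : ℚ) * (a.choose (n-j) : ℚ) :=
    myVand m a n
  have hV2 : ((m+a).choose (n-1) : ℚ) = ∑ j ∈ range n, (m.choose j : ℚ) * (a.choose (n-1-j) : ℚ) := by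
    have h := myVand m a (n-1); rw [e1] at h; exact h
  rw [hV1, hV2]
  -- the auxiliary function
  set g : ℕ → ℚ := fun j => 2*(j:ℚ)^2/((n:ℚ)+(j:ℚ)) * (a.choose (n-j) : ℚ) * (m.choose j : ℚ) with hg
  have hterm : ∀ j ∈ range n, ((m:ℚ) + (n:ℚ) + 1) *
        ((2*(j:ℚ)+2)/((n:ℚ)+(j:ℚ)+1) * ((a.choose (n-1-j) : ℕ) : ℚ)) * (m.choose j : ℚ)
      = (2*(j:ℚ)+2) * (a.choose (n-1-j) : ℚ) * (m.choose j : ℚ) + g (j+1) := by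
    intro j hj
    have hnd : (n:ℚ)+(j:ℚ)+1 ≠ 0 := by positivity
    have h1 := myL1 m j
    simp only [hg]
    rw [show n - (j+1) = n-1-j by omega]
    push_cast
    field_simp
    linear_combination ((n:ℚ)+(j:ℚ)+1) * ((a.choose (n-1-j) : ℕ):ℚ) * h1
  rw [Finset.sum_congr rfl hterm, Finset.sum_add_distrib]
  have hshift : ∑ j ∈ range n, g (j+1) = (∑ j ∈ range n, g j) + g n := by
    have h0 : g 0 = 0 := by simp [hg]
    have := Finset.sum_range_succ' g n
    rw [Finset.sum_range_succ] at this
    linarith [this]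
  rw [hshift]
  have hgn : g n = (n:ℚ) * (m.choose n : ℚ) := by
    simp only [hg, Nat.sub_self, Nat.choose_zero_right, Nat.cast_one]
    field_simp
    ring
  rw [hgn, Finset.sum_range_succ, Nat.sub_self, Nat.choose_zero_right]
  have hper : ∀ j ∈ range n,
      (2*(j:ℚ)+2) * (a.choose (n-1-j) : ℚ) * (m.choose j : ℚ) + g j
      = (n:ℚ) * ((m.choose j : ℚ) * (a.choose (n-j) : ℚ))
        - ((n:ℚ)-2) * ((m.choose j : ℚ) * (a.choose (n-1-j) : ℚ)) := by
    intro j hj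
    have hjn := Finset.mem_range.mp hj
    have h2 := myL2 n j hjn
    have hnd : (n:ℚ)+(j:ℚ) ≠ 0 := by positivity
    simp only [hg]
    field_simp
    linear_combination (-((n:ℚ)+2*(j:ℚ))) * (m.choose j : ℚ) * h2
  have hfin : (∑ x ∈ range n, (2*(x:ℚ)+2) * (a.choose (n-1-x) : ℚ) * (m.choose x : ℚ))
        + ∑ j ∈ range n, g j
      = (n:ℚ) * (∑ j ∈ range n, (m.choose j : ℚ) * (a.choose (n-j) : ℚ))
        - ((n:ℚ)-2) * (∑ j ∈ range n, (m.choose j : ℚ) * (a.choose (n-1-j) : ℚ)) := by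
    rw [← Finset.sum_add_distrib, Finset.mul_sum, Finset.mul_sum, ← Finset.sum_sub_distrib]
    exact Finset.sum_congr rfl hper
  push_cast
  linear_combination -hfin


lemma lhs_prod_eval (n m : ℕ) (hn : 1 ≤ n) :
    ∏ i ∈ Finset.range (n - 1), ((m:ℚ) + ((n : ℚ) + 1 + i)) =
      (((n-1)! : ℕ) : ℚ) * (((m + 2*n - 1).choose (n-1) : ℕ) : ℚ) := by
  have hnat : ∏ i ∈ Finset.range (n-1), (m+n+1+i) = (m+2*n-1).descFactorial (n-1) := by
    rw [Nat.descFactorial_eq_prod_range, ← Finset.prod_range_reflect]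
    refine Finset.prod_congr rfl fun i hi => ?_
    have := Finset.mem_range.mp hi
    omega
  have : ∏ i ∈ Finset.range (n - 1), ((m:ℚ) + ((n : ℚ) + 1 + i)) =
      ((∏ i ∈ Finset.range (n-1), (m+n+1+i) : ℕ) : ℚ) := by
    rw [Nat.cast_prod]
    refine Finset.prod_congr rfl fun i hi => ?_
    push_cast
    ring
  rw [this, hnat, Nat.descFactorial_eq_factorial_mul_choose, Nat.cast_mul]

/-- For all `n ≥ 1`:
`((x+2)/(x+n+1))·binom(x+2n-1, n-1)
  = Σ_{j=0}^{n-1} ((2j+2)/(n+j+1))·binom(2n-1, n-j-1)·binom(x, j)`,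
written with the denominator `x+n+1` cleared (note
`binom(x+2n-1, n-1) = (x+n+1)(x+n+2)⋯(x+2n-1)/(n-1)!`). -/
theorem statement17 (n : ℕ) (hn : 1 ≤ n) :
    (Polynomial.X + Polynomial.C (2 : ℚ)) * (Polynomial.C (((n - 1)! : ℚ))⁻¹ *
        ∏ i ∈ Finset.range (n - 1), (Polynomial.X + Polynomial.C ((n : ℚ) + 1 + i))) =
      (Polynomial.X + Polynomial.C ((n : ℚ) + 1)) *
        ∑ j ∈ Finset.range n,
          Polynomial.C ((2 * (j : ℚ) + 2) / ((n : ℚ) + j + 1) *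
            ((2 * n - 1).choose (n - j - 1) : ℚ)) * choosePoly j := by
  apply Polynomial.eq_of_infinite_eval_eq
  refine Set.Infinite.mono ?_ (Set.infinite_range_of_injective (Nat.cast_injective (R := ℚ)))
  rintro x ⟨m, rfl⟩
  simp only [Set.mem_setOf_eq, eval_mul, eval_add, eval_X, eval_C, eval_prod, eval_finset_sum]
  rw [lhs_prod_eval n m hn]
  have hfac : ((n-1)! : ℚ)⁻¹ * ((((n-1)! : ℕ) : ℚ) * (((m + 2*n - 1).choose (n-1) : ℕ) : ℚ))
      = (((m + 2*n - 1).choose (n-1) : ℕ) : ℚ) :=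
    inv_mul_cancel_left₀ (by exact_mod_cast Nat.factorial_ne_zero (n-1)) _
  rw [hfac]
  have hK := key n m hn
  rw [hK]
  rw [Finset.mul_sum]
  apply Finset.sum_congr rfl
  intro j hj
  rw [choosePoly_eval j m, show n - 1 - j = n - j - 1 by omega]
  ring
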